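/- The variance of the quasispecies distribution Q(σ,a) equals σ a e^{-a} (σ e^{-a} + a - 1)/(σe^{-a} - 1)^2. -/

import Mathlib

open Real

/-- The quasispecies distribution: `ρ*_k = (σ e^{-a} - 1) (a^k/k!) ∑_{i≥1} i^k/σ^i`. -/
noncomputable def quasiRho (σ a : ℝ) (k : ℕ) : ℝ :=
  (σ * Real.exp (-a) - 1) * (a ^ k / (Nat.factorial k : ℝ)) *
    ∑' i : ℕ, ((i + 1 : ℕ) : ℝ) ^ k / σ ^ (i + 1)

lemma aux_exp0 (x : ℝ) : HasSum (fun k : ℕ => x ^ k / (Nat.factorial k : ℝ)) (Real.exp x) := by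
  rw [Real.exp_eq_exp_ℝ]
  exact NormedSpace.expSeries_div_hasSum_exp x

lemma aux_exp1 (x : ℝ) :
    HasSum (fun k : ℕ => (k : ℝ) * (x ^ k / (Nat.factorial k : ℝ))) (x * Real.exp x) := by
  have h := (aux_exp0 x).mul_left x
  have h2 : HasSum (fun k : ℕ => ((k + 1 : ℕ) : ℝ) * (x ^ (k + 1) / (Nat.factorial (k + 1) : ℝ)))
      (x * Real.exp x) := by
    refine h.congr_fun fun k => ?_
    have hk : (Nat.factorial k : ℝ) ≠ 0 := by positivity
    rw [Nat.factorial_succ]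
    push_cast
    field_simp
    ring
  have h3 := (hasSum_nat_add_iff
    (f := fun k : ℕ => (k : ℝ) * (x ^ k / (Nat.factorial k : ℝ))) 1).1 h2
  simpa using h3

lemma aux_exp2 (x : ℝ) :
    HasSum (fun k : ℕ => (k : ℝ) ^ 2 * (x ^ k / (Nat.factorial k : ℝ)))
      ((x + x ^ 2) * Real.exp x) := by
  have h := ((aux_exp1 x).mul_left x).add ((aux_exp0 x).mul_left x)
  have h2 : HasSum
      (fun k : ℕ => ((k + 1 : ℕ) : ℝ) ^ 2 * (x ^ (k + 1) / (Nat.factorial (k + 1) : ℝ)))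
      (x * (x * Real.exp x) + x * Real.exp x) := by
    refine h.congr_fun fun k => ?_
    have hk : (Nat.factorial k : ℝ) ≠ 0 := by positivity
    rw [Nat.factorial_succ]
    push_cast
    field_simp
    ring
  have h3 := (hasSum_nat_add_iff
    (f := fun k : ℕ => (k : ℝ) ^ 2 * (x ^ k / (Nat.factorial k : ℝ))) 1).1 h2
  have h4 : HasSum (fun k : ℕ => (k : ℝ) ^ 2 * (x ^ k / (Nat.factorial k : ℝ)))
      (x * (x * Real.exp x) + x * Real.exp x + 0) := by simpa using h3
  convert h4 using 1
  ring

lemma aux_expq (x μ : ℝ) :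
    HasSum (fun k : ℕ => ((k : ℝ) - μ) ^ 2 * (x ^ k / (Nat.factorial k : ℝ)))
      (((x - μ) ^ 2 + x) * Real.exp x) := by
  have h := ((aux_exp2 x).sub ((aux_exp1 x).mul_left (2 * μ))).add
    ((aux_exp0 x).mul_left (μ ^ 2))
  have h2 : HasSum (fun k : ℕ => ((k : ℝ) - μ) ^ 2 * (x ^ k / (Nat.factorial k : ℝ)))
      ((x + x ^ 2) * Real.exp x - 2 * μ * (x * Real.exp x) + μ ^ 2 * Real.exp x) := by
    refine h.congr_fun fun k => ?_
    ring
  convert h2 using 1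
  ring

lemma aux_geom0 {r : ℝ} (hr0 : 0 < r) (hr1 : r < 1) :
    HasSum (fun i : ℕ => r ^ (i + 1)) (r / (1 - r)) := by
  have h := (hasSum_geometric_of_lt_one hr0.le hr1).mul_left r
  refine h.congr_fun fun i => ?_
  rw [pow_succ]
  ring

lemma aux_geom1 {r : ℝ} (hr0 : 0 < r) (hr1 : r < 1) :
    HasSum (fun i : ℕ => ((i : ℝ) + 1) * r ^ (i + 1)) (r / (1 - r) ^ 2) := by
  have hr' : ‖r‖ < 1 := by rw [Real.norm_eq_abs, abs_of_pos hr0]; exact hr1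
  have h := hasSum_coe_mul_geometric_of_norm_lt_one hr'
  have h2 := (hasSum_nat_add_iff (f := fun n : ℕ => (n : ℝ) * r ^ n) 1).2 (by simpa using h)
  refine h2.congr_fun fun i => ?_
  push_cast
  ring

lemma aux_geom2 {r : ℝ} (hr0 : 0 < r) (hr1 : r < 1) :
    HasSum (fun i : ℕ => ((i : ℝ) + 1) ^ 2 * r ^ (i + 1)) (r * (1 + r) / (1 - r) ^ 3) := by
  have hr' : ‖r‖ < 1 := by rw [Real.norm_eq_abs, abs_of_pos hr0]; exact hr1
  have h1r : (1 : ℝ) - r ≠ 0 := by nlinarith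
  have hc := hasSum_choose_mul_geometric_of_norm_lt_one (𝕜 := ℝ) 2 hr'
  -- (n+1) * r^n sum
  have hn1 : HasSum (fun n : ℕ => ((n : ℝ) + 1) * r ^ n) (1 / (1 - r) ^ 2) := by
    have h := (hasSum_coe_mul_geometric_of_norm_lt_one hr').add
      (hasSum_geometric_of_lt_one hr0.le hr1)
    have heq : r / (1 - r) ^ 2 + (1 - r)⁻¹ = 1 / (1 - r) ^ 2 := by
      field_simp
      ring
    rw [heq] at h
    refine h.congr_fun fun n => ?_
    ring
  have h := ((hc.mul_left 2).sub hn1).mul_left r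
  have hsum : r * (2 * (1 / (1 - r) ^ (2 + 1)) - 1 / (1 - r) ^ 2) = r * (1 + r) / (1 - r) ^ 3 := by
    field_simp
    ring
  rw [hsum] at h
  refine h.congr_fun fun n => ?_
  have hch : (((n + 2).choose 2 : ℕ) : ℝ) = ((n : ℝ) + 2) * ((n : ℝ) + 1) / 2 := by
    rw [Nat.cast_choose_two]
    push_cast
    ring
  rw [hch, pow_succ]
  ring

/-- The variance of the quasispecies distribution `Q(σ,a)`, whose mean is
`σ a e^{-a}/(σe^{-a}-1)`, equals `σ a e^{-a} (σ e^{-a} + a - 1)/(σe^{-a} - 1)^2`. -/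
theorem quasiRho_variance (σ a : ℝ) (hσ : 1 < σ) (ha : 0 < a)
    (h : 1 < σ * Real.exp (-a)) :
    ∑' k : ℕ, ((k : ℝ) - σ * a * Real.exp (-a) / (σ * Real.exp (-a) - 1)) ^ 2 *
        quasiRho σ a k =
      σ * a * Real.exp (-a) * (σ * Real.exp (-a) + a - 1) /
        (σ * Real.exp (-a) - 1) ^ 2 := by
  set t := Real.exp a with ht_def
  have ht0 : 0 < t := Real.exp_pos a
  have hE : Real.exp (-a) = t⁻¹ := Real.exp_neg a
  have hσ0 : 0 < σ := lt_trans one_pos hσ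
  have h' : 1 < σ * t⁻¹ := by rw [← hE]; exact h
  have htσ : t < σ := by
    have h1 := mul_pos (sub_pos.2 h') ht0
    have h2 : t⁻¹ * t = 1 := inv_mul_cancel₀ ht0.ne'
    nlinarith
  set r : ℝ := t / σ with hr_def
  have hr0 : 0 < r := div_pos ht0 hσ0
  have hr1 : r < 1 := (div_lt_one hσ0).2 htσ
  set μ : ℝ := σ * a * Real.exp (-a) / (σ * Real.exp (-a) - 1) with hμ_def
  set f : ℕ → ℕ → ℝ := fun i k =>
    ((k : ℝ) - μ) ^ 2 * (a ^ k / (Nat.factorial k : ℝ)) *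
      (((i + 1 : ℕ) : ℝ) ^ k / σ ^ (i + 1)) with hf_def
  set g : ℕ → ℝ := fun i =>
    ((a * ((i : ℝ) + 1) - μ) ^ 2 + a * ((i : ℝ) + 1)) * r ^ (i + 1) with hg_def
  -- inner sum over k
  have hfk : ∀ i : ℕ, HasSum (fun k => f i k) (g i) := by
    intro i
    have hexp := (aux_expq (a * ((i : ℝ) + 1)) μ).mul_right ((σ ^ (i + 1) : ℝ)⁻¹)
    have hsum_eq : (((a * ((i : ℝ) + 1) - μ) ^ 2 + a * ((i : ℝ) + 1)) *
        Real.exp (a * ((i : ℝ) + 1))) * (σ ^ (i + 1) : ℝ)⁻¹ = g i := by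
      have hexpn : Real.exp (a * ((i : ℝ) + 1)) = t ^ (i + 1) := by
        rw [ht_def, ← Real.exp_nat_mul]
        push_cast
        ring_nf
      rw [hexpn, hg_def]
      simp only
      rw [hr_def, div_pow]
      field_simp
    rw [hsum_eq] at hexp
    refine hexp.congr_fun fun k => ?_
    rw [hf_def]
    simp only
    rw [mul_pow]
    push_cast
    field_simp
  -- sum over i
  set T : ℝ := a ^ 2 * (r * (1 + r) / (1 - r) ^ 3) + (a - 2 * a * μ) * (r / (1 - r) ^ 2) +
    μ ^ 2 * (r / (1 - r)) with hT_def
  have hg_sum : HasSum g T := by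
    have h := (((aux_geom2 hr0 hr1).mul_left (a ^ 2)).add
      ((aux_geom1 hr0 hr1).mul_left (a - 2 * a * μ))).add ((aux_geom0 hr0 hr1).mul_left (μ ^ 2))
    refine h.congr_fun fun i => ?_
    rw [hg_def]
    simp only
    ring
  -- summability of the double family
  have hnonneg : ∀ p : ℕ × ℕ, 0 ≤ f p.1 p.2 := by
    intro p
    rw [hf_def]
    have h1 : (0:ℝ) ≤ ((p.2 : ℝ) - μ) ^ 2 := sq_nonneg _
    positivity
  have hsummable : Summable (Function.uncurry f) := by
    rw [Function.uncurry_def]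
    refine (summable_prod_of_nonneg hnonneg).2 ⟨fun i => (hfk i).summable, ?_⟩
    refine Summable.congr hg_sum.summable fun i => ?_
    exact ((hfk i).tsum_eq).symm
  -- rewrite each term of the outer sum
  have step1 : ∀ k : ℕ, ((k : ℝ) - μ) ^ 2 * quasiRho σ a k =
      (σ * Real.exp (-a) - 1) * ∑' i, f i k := by
    intro k
    rw [quasiRho, hf_def]
    simp only
    rw [tsum_mul_left]
    ring
  calc ∑' k : ℕ, ((k : ℝ) - μ) ^ 2 * quasiRho σ a k
      = ∑' k : ℕ, (σ * Real.exp (-a) - 1) * ∑' i, f i k := tsum_congr step1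
    _ = (σ * Real.exp (-a) - 1) * ∑' k, ∑' i, f i k := tsum_mul_left
    _ = (σ * Real.exp (-a) - 1) * ∑' i, ∑' k, f i k := by rw [Summable.tsum_comm hsummable]
    _ = (σ * Real.exp (-a) - 1) * T := by
        rw [tsum_congr fun i => (hfk i).tsum_eq, hg_sum.tsum_eq]
    _ = σ * a * Real.exp (-a) * (σ * Real.exp (-a) + a - 1) /
        (σ * Real.exp (-a) - 1) ^ 2 := by
        rw [hT_def, hμ_def, hE, hr_def]
        have hσt : σ - t ≠ 0 := by nlinarith
        have h1r : 1 - t / σ ≠ 0 := by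
          rw [sub_ne_zero]
          intro hc
          apply hσt
          field_simp at hc
          linarith
        have hS1 : σ * t⁻¹ - 1 ≠ 0 := by nlinarith
        field_simp
        ring
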